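/- Let D be a dyadic lattice in ℝ^d and let w be a weight such that w(H) = +∞ for every quadrant H of D. Let 1 < p ≤ q ≤ ∞ and α ∈ [0, d) satisfy 1/q + α/d = 1/p. Then there is a constant C depending only on α, d, p, q such that ‖M^D_{α,w} f‖_{L^q(ℝ^d, w dx)} ≤ C ‖f‖_{L^p(ℝ^d, w dx)} for all f ∈ L^p(ℝ^d, w dx). -/

import Mathlib

open MeasureTheory ENNReal NNReal Set

noncomputable section

/-- A half-open axis-parallel cube in `ℝ^d`, given by its corner and (positive) sidelength. -/
structure Cube (d : ℕ) where
  corner : Fin d → ℝ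
  side : ℝ
  side_pos : 0 < side

namespace Cube

variable {d : ℕ}

/-- The set of points of the cube: `[x_1, x_1+l) × ⋯ × [x_d, x_d+l)`. -/
def toSet (Q : Cube d) : Set (Fin d → ℝ) :=
  {y | ∀ i, Q.corner i ≤ y i ∧ y i < Q.corner i + Q.side}

/-- The translate `Q + l(Q) m` of a cube. -/
def translate (Q : Cube d) (m : Fin d → ℤ) : Cube d :=
  ⟨fun i => Q.corner i + Q.side * (m i : ℝ), Q.side, Q.side_pos⟩

/-- The corner child `x(Q) + (1/2)(Q - x(Q))` of a cube. -/
def cornerChild (Q : Cube d) : Cube d :=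
  ⟨Q.corner, Q.side / 2, by have := Q.side_pos; linarith⟩

/-- The threefold expansion `x(Q) + 3(Q - x(Q))` of a cube from its corner. -/
def expand3 (Q : Cube d) : Cube d :=
  ⟨Q.corner, 3 * Q.side, by have := Q.side_pos; linarith⟩

/-- The dilate `D_c Q`: cube with the same center as `Q` and sidelength `c·l(Q)`. -/
def dilate (Q : Cube d) (c : ℝ) (hc : 0 < c) : Cube d :=
  ⟨fun i => Q.corner i + Q.side / 2 - c * Q.side / 2, c * Q.side, by
    have := Q.side_pos; positivity⟩

end Cube

/-- A dyadic lattice in `ℝ^d`: a family of generations of cubes, each generation formed by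
all translates of one of its cubes, and each generation containing a cube whose corner child
belongs to the next generation. -/
structure DyadicLattice (d : ℕ) where
  gen : ℤ → Set (Cube d)
  gen_translates : ∀ k, ∃ Q ∈ gen k, gen k = {R | ∃ m : Fin d → ℤ, R = Q.translate m}
  cornerChild_mem : ∀ k, ∃ Q ∈ gen k, Q.cornerChild ∈ gen (k + 1)

/-- The collection of all cubes of a dyadic lattice. -/
def DyadicLattice.cubes {d : ℕ} (D : DyadicLattice d) : Set (Cube d) := ⋃ k, D.gen k

/-- The quadrant of a dyadic lattice containing `x`: the union of all cubes of the lattice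
containing `x`. -/
def DyadicLattice.quadrant {d : ℕ} (D : DyadicLattice d) (x : Fin d → ℝ) :
    Set (Fin d → ℝ) :=
  ⋃ Q ∈ {Q : Cube d | Q ∈ D.cubes ∧ x ∈ Q.toSet}, Q.toSet

/-- A weight: a locally integrable, a.e. positive (and finite) function. -/
def IsWeight {d : ℕ} (w : (Fin d → ℝ) → ℝ) : Prop :=
  LocallyIntegrable w volume ∧ ∀ᵐ x ∂(volume : Measure (Fin d → ℝ)), 0 < w x

/-- The measure `w dx` associated to a weight. -/
def wMeasure {d : ℕ} (w : (Fin d → ℝ) → ℝ) : Measure (Fin d → ℝ) :=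
  volume.withDensity fun x => ENNReal.ofReal (w x)

/-- `w(E) = ∫_E w dx`. -/
def wInt {d : ℕ} (w : (Fin d → ℝ) → ℝ) (E : Set (Fin d → ℝ)) : ℝ≥0∞ :=
  ∫⁻ x in E, ENNReal.ofReal (w x)

/-- The `L^q` norm (with `q = ∞` allowed) of an `ℝ≥0∞`-valued function. -/
def eLpNormENN {X : Type*} [MeasurableSpace X] (g : X → ℝ≥0∞) (q : ℝ≥0∞)
    (μ : Measure X) : ℝ≥0∞ :=
  if q = ∞ then essSup g μ
  else (∫⁻ x, g x ^ q.toReal ∂μ) ^ (1 / q.toReal)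

/-- The weak `L^q` quasinorm (with `q = ∞` allowed, interpreted as the `L^∞` norm) of an
`ℝ≥0∞`-valued function: `sup_{t>0} t · μ{g > t}^{1/q}`. -/
def wnormENN {X : Type*} [MeasurableSpace X] (g : X → ℝ≥0∞) (q : ℝ≥0∞)
    (μ : Measure X) : ℝ≥0∞ :=
  if q = ∞ then essSup g μ
  else ⨆ t : ℝ≥0, (t : ℝ≥0∞) * μ {x | (t : ℝ≥0∞) < g x} ^ (1 / q.toReal)

/-- The weighted dyadic fractional maximal operator
`M^D_{α,w} f(x) = sup_{Q ∈ D, x ∈ Q} w(Q)^{α/d-1} ∫_Q |f| w`. -/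
def MwDyadic {d : ℕ} (D : DyadicLattice d) (α : ℝ) (w f : (Fin d → ℝ) → ℝ)
    (x : Fin d → ℝ) : ℝ≥0∞ :=
  ⨆ (Q : Cube d) (_ : Q ∈ D.cubes) (_ : x ∈ Q.toSet),
    wInt w Q.toSet ^ (α / (d : ℝ) - 1) *
      ∫⁻ y in Q.toSet, (‖f y‖₊ : ℝ≥0∞) * ENNReal.ofReal (w y)

/-- The dyadic fractional maximal operator `M^D_α f(x) = sup_{Q ∈ D, x ∈ Q} |Q|^{α/d} ⨍_Q |f|`. -/
def MfracDyadic {d : ℕ} (D : DyadicLattice d) (α : ℝ) (f : (Fin d → ℝ) → ℝ)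
    (x : Fin d → ℝ) : ℝ≥0∞ :=
  ⨆ (Q : Cube d) (_ : Q ∈ D.cubes) (_ : x ∈ Q.toSet),
    volume Q.toSet ^ (α / (d : ℝ) - 1) * ∫⁻ y in Q.toSet, (‖f y‖₊ : ℝ≥0∞)

/-- The fractional maximal operator `M_α f(x) = sup_{Q ∋ x} |Q|^{α/d} ⨍_Q |f|`,
supremum over all cubes containing `x`. -/
def Mfrac {d : ℕ} (α : ℝ) (f : (Fin d → ℝ) → ℝ) (x : Fin d → ℝ) : ℝ≥0∞ :=
  ⨆ (Q : Cube d) (_ : x ∈ Q.toSet),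
    volume Q.toSet ^ (α / (d : ℝ) - 1) * ∫⁻ y in Q.toSet, (‖f y‖₊ : ℝ≥0∞)

/-- The weighted fractional maximal operator
`M_{α,w} f(x) = sup_{Q ∋ x} w(Q)^{α/d-1} ∫_Q |f| w`, supremum over all cubes containing `x`. -/
def Mwfrac {d : ℕ} (α : ℝ) (w f : (Fin d → ℝ) → ℝ) (x : Fin d → ℝ) : ℝ≥0∞ :=
  ⨆ (Q : Cube d) (_ : x ∈ Q.toSet),
    wInt w Q.toSet ^ (α / (d : ℝ) - 1) *
      ∫⁻ y in Q.toSet, (‖f y‖₊ : ℝ≥0∞) * ENNReal.ofReal (w y)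

/-- An `η`-sparse collection of cubes: each cube `Q` has a measurable subset `G(Q)` with
`|G(Q)| ≥ η|Q|`, the sets `G(Q)` being pairwise disjoint. -/
def IsSparseCubes {d : ℕ} (η : ℝ) (S : Set (Cube d)) : Prop :=
  ∃ G : Cube d → Set (Fin d → ℝ),
    (∀ Q ∈ S, G Q ⊆ Q.toSet ∧ MeasurableSet (G Q) ∧
      ENNReal.ofReal η * volume Q.toSet ≤ volume (G Q)) ∧
    S.PairwiseDisjoint G

/-- The sparse operator `A_S^α f(x) = Σ_{Q ∈ S} χ_Q(x) |Q|^{α/d} ⨍_Q |f|`. -/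
def sparseOp {d : ℕ} (α : ℝ) (S : Set (Cube d)) (f : (Fin d → ℝ) → ℝ)
    (x : Fin d → ℝ) : ℝ≥0∞ :=
  ∑' Q : S, (Q : Cube d).toSet.indicator
    (fun _ => volume (Q : Cube d).toSet ^ (α / (d : ℝ) - 1) *
      ∫⁻ y in (Q : Cube d).toSet, (‖f y‖₊ : ℝ≥0∞)) x

/-- The `A_{p,q}^α` constant of a pair of weights:
`[v,w] = sup_Q |Q|^{α/d-1} (∫_Q v^{-p'/p})^{1/p'} (∫_Q w)^{1/q}` where `p' = p/(p-1)`. -/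
def apqConst {d : ℕ} (p q α : ℝ) (v w : (Fin d → ℝ) → ℝ) : ℝ≥0∞ :=
  ⨆ Q : Cube d,
    volume Q.toSet ^ (α / (d : ℝ) - 1) *
      (∫⁻ x in Q.toSet, ENNReal.ofReal (v x ^ (-(p / (p - 1)) / p))) ^ ((p - 1) / p) *
      (∫⁻ x in Q.toSet, ENNReal.ofReal (w x)) ^ (1 / q)

/-- The Muckenhoupt `A_∞` condition: `sup_Q exp(⨍_Q log w⁻¹) · ⨍_Q w < ∞`. -/
def IsAinfty {d : ℕ} (w : (Fin d → ℝ) → ℝ) : Prop :=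
  ∃ C : ℝ, ∀ Q : Cube d,
    Real.exp (⨍ x in Q.toSet, Real.log (w x)⁻¹ ∂volume) *
      (⨍ x in Q.toSet, w x ∂volume) ≤ C

/-- The Euclidean norm of a point of `ℝ^d`. -/
def euclNorm {d : ℕ} (x : Fin d → ℝ) : ℝ := Real.sqrt (∑ i, x i ^ 2)

/-- The auxiliary maximal operator `M_{T,λ}` controlling oscillations of truncations of `T`:
`M_{T,λ} f(x) = sup_{Q ∋ x} ess sup_{x',x'' ∈ Q} |T(fχ_{ℝ^d∖Q*})(x') − T(fχ_{ℝ^d∖Q*})(x'')|`. -/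
def MT {d : ℕ} (T : ((Fin d → ℝ) → ℝ) → (Fin d → ℝ) → ℝ) (lam : ℝ) (hlam : 0 < lam)
    (f : (Fin d → ℝ) → ℝ) (x : Fin d → ℝ) : ℝ≥0∞ :=
  ⨆ (Q : Cube d) (_ : x ∈ Q.toSet),
    essSup
      (fun z : (Fin d → ℝ) × (Fin d → ℝ) =>
        (‖T (((Q.dilate lam hlam).toSet)ᶜ.indicator f) z.1 -
            T (((Q.dilate lam hlam).toSet)ᶜ.indicator f) z.2‖₊ : ℝ≥0∞))
      ((volume.restrict Q.toSet).prod (volume.restrict Q.toSet))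

end

noncomputable section Aux

namespace DyadicAux

variable {d : ℕ}

lemma cube_measurableSet (Q : Cube d) : MeasurableSet Q.toSet := by
  have h : Q.toSet = Set.pi Set.univ (fun i => Set.Ico (Q.corner i) (Q.corner i + Q.side)) := by
    ext y; simp [Cube.toSet, Set.mem_pi, Set.mem_Ico]
  rw [h]
  exact MeasurableSet.univ_pi fun i => measurableSet_Ico

lemma mem_translate_iff (Q : Cube d) (m : Fin d → ℤ) (x : Fin d → ℝ) :
    x ∈ (Q.translate m).toSet ↔
      ∀ i, Q.corner i + Q.side * m i ≤ x i ∧ x i < Q.corner i + Q.side * m i + Q.side := by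
  simp [Cube.translate, Cube.toSet]

lemma translate_mem_unique (Q : Cube d) {m m' : Fin d → ℤ} {x : Fin d → ℝ}
    (h : x ∈ (Q.translate m).toSet) (h' : x ∈ (Q.translate m').toSet) : m = m' := by
  rw [mem_translate_iff] at h h'
  funext i
  have hl := Q.side_pos
  obtain ⟨h1, h2⟩ := h i
  obtain ⟨h1', h2'⟩ := h' i
  have hmm : (m i : ℝ) < m' i + 1 := by
    have : Q.side * (m i : ℝ) < Q.side * (m' i + 1) := by nlinarith
    exact lt_of_mul_lt_mul_left this hl.le
  have hmm' : (m' i : ℝ) < m i + 1 := by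
    have : Q.side * (m' i : ℝ) < Q.side * (m i + 1) := by nlinarith
    exact lt_of_mul_lt_mul_left this hl.le
  have b1 : m i < m' i + 1 := by exact_mod_cast hmm
  have b2 : m' i < m i + 1 := by exact_mod_cast hmm'
  omega

lemma translate_mem_exists (Q : Cube d) (x : Fin d → ℝ) :
    ∃ m : Fin d → ℤ, x ∈ (Q.translate m).toSet := by
  refine ⟨fun i => ⌊(x i - Q.corner i) / Q.side⌋, ?_⟩
  rw [mem_translate_iff]
  intro i
  have hl := Q.side_pos
  set t := (x i - Q.corner i) / Q.side with ht
  have h1 : (⌊t⌋ : ℝ) ≤ t := Int.floor_le t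
  have h2 : t < ⌊t⌋ + 1 := Int.lt_floor_add_one t
  have hx : x i - Q.corner i = Q.side * t := by rw [ht]; field_simp
  constructor
  · nlinarith
  · nlinarith

lemma translate_translate (Q : Cube d) (m m' : Fin d → ℤ) :
    (Q.translate m).translate m' = Q.translate (m + m') := by
  simp only [Cube.translate, Cube.mk.injEq]
  refine ⟨funext fun i => ?_, trivial⟩
  push_cast [Pi.add_apply]
  ring

variable (D : DyadicLattice d)

lemma gen_eq_translates_of_mem {k : ℤ} {Q : Cube d} (hQ : Q ∈ D.gen k) :
    D.gen k = {R | ∃ m : Fin d → ℤ, R = Q.translate m} := by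
  obtain ⟨Q₀, hQ₀, hset⟩ := D.gen_translates k
  obtain ⟨m₀, rfl⟩ : ∃ m₀, Q = Q₀.translate m₀ := by rw [hset] at hQ; exact hQ
  rw [hset]
  ext R
  constructor
  · rintro ⟨m, rfl⟩
    exact ⟨m - m₀, by rw [translate_translate, add_sub_cancel]⟩
  · rintro ⟨m, rfl⟩
    exact ⟨m₀ + m, by rw [translate_translate]⟩

lemma gen_exists (k : ℤ) (x : Fin d → ℝ) : ∃ Q ∈ D.gen k, x ∈ Q.toSet := by
  obtain ⟨Q₀, hQ₀, hset⟩ := D.gen_translates k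
  obtain ⟨m, hm⟩ := translate_mem_exists Q₀ x
  exact ⟨Q₀.translate m, by rw [hset]; exact ⟨m, rfl⟩, hm⟩

lemma gen_unique {k : ℤ} {Q R : Cube d} (hQ : Q ∈ D.gen k) (hR : R ∈ D.gen k)
    {x : Fin d → ℝ} (hxQ : x ∈ Q.toSet) (hxR : x ∈ R.toSet) : Q = R := by
  obtain ⟨Q₀, hQ₀, hset⟩ := D.gen_translates k
  rw [hset] at hQ hR
  obtain ⟨m, rfl⟩ := hQ
  obtain ⟨m', rfl⟩ := hR
  rw [translate_mem_unique Q₀ hxQ hxR]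

lemma side_eq_of_mem_gen {k : ℤ} {Q R : Cube d} (hQ : Q ∈ D.gen k) (hR : R ∈ D.gen k) :
    Q.side = R.side := by
  obtain ⟨Q₀, hQ₀, hset⟩ := D.gen_translates k
  rw [hset] at hQ hR
  obtain ⟨m, rfl⟩ := hQ
  obtain ⟨m', rfl⟩ := hR
  rfl

lemma side_succ {k : ℤ} {Q R : Cube d} (hQ : Q ∈ D.gen k) (hR : R ∈ D.gen (k + 1)) :
    R.side = Q.side / 2 := by
  obtain ⟨P, hP, hPc⟩ := D.cornerChild_mem k
  have h1 : R.side = P.cornerChild.side := side_eq_of_mem_gen D hR hPc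
  have h2 : P.side = Q.side := side_eq_of_mem_gen D hP hQ
  rw [h1]; show P.side / 2 = Q.side / 2; rw [h2]

lemma side_pos_mem {k : ℤ} {Q : Cube d} (_ : Q ∈ D.gen k) : 0 < Q.side := Q.side_pos

/-- each cube of generation `k+1` is contained in a cube of generation `k` -/
lemma exists_superset_succ {k : ℤ} {R : Cube d} (hR : R ∈ D.gen (k + 1)) :
    ∃ Q ∈ D.gen k, R.toSet ⊆ Q.toSet := by
  obtain ⟨P, hP, hPc⟩ := D.cornerChild_mem k
  have hgen := gen_eq_translates_of_mem D hPc
  rw [hgen] at hR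
  obtain ⟨m, rfl⟩ := hR
  have hl := P.side_pos
  -- choose j i with m i = 2 j i or m i = 2 j i + 1
  have hch : ∀ i : Fin d, ∃ j : ℤ, m i = 2 * j ∨ m i = 2 * j + 1 := by
    intro i
    rcases Int.even_or_odd (m i) with ⟨j, hj⟩ | ⟨j, hj⟩
    · exact ⟨j, Or.inl (by omega)⟩
    · exact ⟨j, Or.inr (by omega)⟩
  choose j hj using hch
  refine ⟨P.translate j, ?_, ?_⟩
  · rw [gen_eq_translates_of_mem D hP]; exact ⟨j, rfl⟩
  · intro y hy
    rw [mem_translate_iff] at hy ⊢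
    intro i
    obtain ⟨h1, h2⟩ := hy i
    simp only [Cube.cornerChild] at h1 h2
    rcases hj i with hji | hji <;>
      · rw [hji] at h1 h2
        push_cast at h1 h2 ⊢
        constructor <;> nlinarith

lemma exists_superset {j k : ℤ} (hjk : j ≤ k) {R : Cube d} (hR : R ∈ D.gen k) :
    ∃ Q ∈ D.gen j, R.toSet ⊆ Q.toSet := by
  have H : ∀ n, j ≤ n → ∀ R ∈ D.gen n, ∃ Q ∈ D.gen j, R.toSet ⊆ Q.toSet := fun n hn =>
    Int.le_induction (motive := fun n _ => ∀ R ∈ D.gen n, ∃ Q ∈ D.gen j, R.toSet ⊆ Q.toSet)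
      (fun R hR => ⟨R, hR, subset_rfl⟩)
      (fun n _ ih R hR => by
        obtain ⟨P, hP, hRP⟩ := exists_superset_succ D hR
        obtain ⟨Q, hQ, hPQ⟩ := ih P hP
        exact ⟨Q, hQ, hRP.trans hPQ⟩) n hn
  exact H k hjk R hR

lemma subset_of_common_point {j k : ℤ} (hjk : j ≤ k) {Q R : Cube d}
    (hQ : Q ∈ D.gen j) (hR : R ∈ D.gen k) {x : Fin d → ℝ}
    (hxQ : x ∈ Q.toSet) (hxR : x ∈ R.toSet) : R.toSet ⊆ Q.toSet := by
  obtain ⟨P, hP, hRP⟩ := exists_superset D hjk hR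
  have hxP : x ∈ P.toSet := hRP hxR
  rw [gen_unique D hQ hP hxQ hxP]
  exact hRP

/-- any two cubes of the lattice through a common point are nested -/
lemma chain_at {Q R : Cube d} (hQ : Q ∈ D.cubes) (hR : R ∈ D.cubes) {x : Fin d → ℝ}
    (hxQ : x ∈ Q.toSet) (hxR : x ∈ R.toSet) : R.toSet ⊆ Q.toSet ∨ Q.toSet ⊆ R.toSet := by
  obtain ⟨sj, ⟨j, rfl⟩, hQj⟩ := hQ
  obtain ⟨sk, ⟨k, rfl⟩, hRk⟩ := hR
  rcases le_total j k with h | h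
  · exact Or.inl (subset_of_common_point D h hQj hRk hxQ hxR)
  · exact Or.inr (subset_of_common_point D h hRk hQj hxR hxQ)

/-- the cube of generation `k` containing `x` -/
def Qg (k : ℤ) (x : Fin d → ℝ) : Cube d := (gen_exists D k x).choose

lemma Qg_mem (k : ℤ) (x : Fin d → ℝ) : Qg D k x ∈ D.gen k := (gen_exists D k x).choose_spec.1

lemma mem_Qg (k : ℤ) (x : Fin d → ℝ) : x ∈ (Qg D k x).toSet := (gen_exists D k x).choose_spec.2

lemma eq_Qg {k : ℤ} {Q : Cube d} (hQ : Q ∈ D.gen k) {x : Fin d → ℝ} (hx : x ∈ Q.toSet) :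
    Q = Qg D k x := gen_unique D hQ (Qg_mem D k x) hx (mem_Qg D k x)

lemma Qg_antitone {j k : ℤ} (hjk : j ≤ k) (x : Fin d → ℝ) :
    (Qg D k x).toSet ⊆ (Qg D j x).toSet :=
  subset_of_common_point D hjk (Qg_mem D j x) (Qg_mem D k x) (mem_Qg D j x) (mem_Qg D k x)

lemma quadrant_eq (x : Fin d → ℝ) : D.quadrant x = ⋃ k : ℤ, (Qg D k x).toSet := by
  ext y
  simp only [DyadicLattice.quadrant, Set.mem_iUnion, Set.mem_setOf_eq]
  constructor
  · rintro ⟨Q, ⟨⟨⟨s, ⟨k, rfl⟩, hQk⟩, hxQ⟩, hyQ⟩⟩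
    exact ⟨k, by rwa [← eq_Qg D hQk hxQ]⟩
  · rintro ⟨k, hy⟩
    exact ⟨Qg D k x, ⟨⟨Set.mem_iUnion.2 ⟨k, Qg_mem D k x⟩, mem_Qg D k x⟩, hy⟩⟩

lemma cubes_countable : D.cubes.Countable := by
  refine Set.countable_iUnion fun k => ?_
  obtain ⟨Q₀, hQ₀, hset⟩ := D.gen_translates k
  rw [hset]
  have : {R : Cube d | ∃ m : Fin d → ℤ, R = Q₀.translate m} =
      Set.range fun m : Fin d → ℤ => Q₀.translate m := by
    ext R; simp [Set.range, eq_comm]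
  rw [this]
  exact Set.countable_range _

end DyadicAux

end Aux

noncomputable section Aux2

namespace DyadicAux

open MeasureTheory ENNReal
open scoped Classical

variable {d : ℕ}

/-- average of `g` over a cube w.r.t. `μ` -/
def mavg (μ : Measure (Fin d → ℝ)) (g : (Fin d → ℝ) → ℝ≥0∞) (Q : Cube d) : ℝ≥0∞ :=
  (μ Q.toSet)⁻¹ * ∫⁻ y in Q.toSet, g y ∂μ

/-- the weighted dyadic maximal operator (exponent 0) -/
def MD (D : DyadicLattice d) (μ : Measure (Fin d → ℝ)) (g : (Fin d → ℝ) → ℝ≥0∞)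
    (x : Fin d → ℝ) : ℝ≥0∞ :=
  ⨆ (Q : Cube d) (_ : Q ∈ D.cubes) (_ : x ∈ Q.toSet), mavg μ g Q

variable {D : DyadicLattice d} {μ : Measure (Fin d → ℝ)} {g g₁ g₂ : (Fin d → ℝ) → ℝ≥0∞}

lemma mavg_le_MD {Q : Cube d} (hQ : Q ∈ D.cubes) {x : Fin d → ℝ} (hx : x ∈ Q.toSet) :
    mavg μ g Q ≤ MD D μ g x :=
  le_iSup_of_le Q (le_iSup_of_le hQ (le_iSup_of_le hx le_rfl))

lemma MD_le {x : Fin d → ℝ} {c : ℝ≥0∞} (h : ∀ Q ∈ D.cubes, x ∈ Q.toSet → mavg μ g Q ≤ c) :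
    MD D μ g x ≤ c :=
  iSup_le fun Q => iSup_le fun hQ => iSup_le fun hx => h Q hQ hx

lemma superlevel_eq (t : ℝ≥0∞) :
    {x | t < MD D μ g x} = ⋃ Q ∈ {Q : Cube d | Q ∈ D.cubes ∧ t < mavg μ g Q}, Q.toSet := by
  ext x
  simp only [Set.mem_setOf_eq, Set.mem_iUnion, exists_prop, MD, lt_iSup_iff]
  constructor
  · rintro ⟨Q, hQ, hx, ht⟩
    exact ⟨Q, ⟨hQ, ht⟩, hx⟩
  · rintro ⟨Q, ⟨hQ, ht⟩, hx⟩
    exact ⟨Q, hQ, hx, ht⟩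

lemma measurableSet_superlevel (t : ℝ≥0∞) : MeasurableSet {x | t < MD D μ g x} := by
  rw [superlevel_eq]
  exact MeasurableSet.biUnion
    (Set.Countable.mono (fun Q hQ => hQ.1) (cubes_countable D))
    (fun Q _ => cube_measurableSet Q)

lemma measure_le_of_lt_mavg {t : ℝ≥0∞} (ht0 : t ≠ 0) (htop : t ≠ ∞) {Q : Cube d}
    (h : t < mavg μ g Q) : μ Q.toSet ≤ t⁻¹ * ∫⁻ y in Q.toSet, g y ∂μ := by
  rcases eq_or_ne (μ Q.toSet) 0 with h0 | h0
  · rw [h0]; exact zero_le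
  rcases eq_or_ne (μ Q.toSet) ∞ with hT | hT
  · exfalso
    rw [mavg, hT] at h
    simp at h
  · have h' : t < (∫⁻ y in Q.toSet, g y ∂μ) / μ Q.toSet := by
      rwa [mavg, ← ENNReal.div_eq_inv_mul] at h
    have h2 : t * μ Q.toSet < ∫⁻ y in Q.toSet, g y ∂μ :=
      (ENNReal.lt_div_iff_mul_lt (Or.inl h0) (Or.inl hT)).mp h'
    rw [← ENNReal.div_eq_inv_mul]
    exact (ENNReal.le_div_iff_mul_le (Or.inl ht0) (Or.inl htop)).mpr
      (by rw [mul_comm]; exact h2.le)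

lemma weak_bound (hquad : ∀ x, μ (D.quadrant x) = ∞) {t B : ℝ≥0∞}
    (ht0 : t ≠ 0) (htop : t ≠ ∞) (hB : B ≠ ∞)
    (havg : ∀ Q ∈ D.cubes, t < mavg μ g Q → μ Q.toSet ≤ B) :
    μ {x | t < MD D μ g x} ≤ t⁻¹ * ∫⁻ x in {x | t < MD D μ g x}, g x ∂μ := by
  set S : Set (Cube d) := {Q | Q ∈ D.cubes ∧ t < mavg μ g Q ∧
    ∀ R ∈ D.cubes, t < mavg μ g R → Q.toSet ⊆ R.toSet → R.toSet ⊆ Q.toSet} with hS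
  have hQg_mem_cubes : ∀ (k : ℤ) (x : Fin d → ℝ), Qg D k x ∈ D.cubes :=
    fun k x => Set.mem_iUnion.2 ⟨k, Qg_mem D k x⟩
  have hEeq : {x | t < MD D μ g x} = ⋃ Q ∈ S, Q.toSet := by
    apply Set.Subset.antisymm
    · intro x hx
      have hx' : ∃ Q, (Q ∈ D.cubes ∧ t < mavg μ g Q) ∧ x ∈ Q.toSet := by
        rw [superlevel_eq t] at hx
        simpa using hx
      obtain ⟨Q, ⟨hQc, htQ⟩, hxQ⟩ := hx'
      obtain ⟨s, ⟨k₀, rfl⟩, hQk₀⟩ := hQc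
      have hK₀ : t < mavg μ g (Qg D k₀ x) := by rwa [← eq_Qg D hQk₀ hxQ]
      have hsup : (⨆ k : ℤ, μ (Qg D k x).toSet) = ∞ := by
        have hdir : Directed (· ⊆ ·) (fun k : ℤ => (Qg D k x).toSet) := by
          intro j k
          exact ⟨min j k, Qg_antitone D (min_le_left _ _) x, Qg_antitone D (min_le_right _ _) x⟩
        rw [← Directed.measure_iUnion hdir, ← quadrant_eq D x]
        exact hquad x
      obtain ⟨k₁, hk₁⟩ : ∃ k, B < μ (Qg D k x).toSet := by
        have hlt : B < ⨆ k, μ (Qg D k x).toSet := by rw [hsup]; exact hB.lt_top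
        exact lt_iSup_iff.mp hlt
      have hbdd : ∀ k, t < mavg μ g (Qg D k x) → k₁ + 1 ≤ k := by
        intro k hk
        by_contra hcon
        have hkk : k ≤ k₁ := by omega
        have hle : μ (Qg D k₁ x).toSet ≤ μ (Qg D k x).toSet :=
          measure_mono (Qg_antitone D hkk x)
        have hB' : μ (Qg D k x).toSet ≤ B := havg _ (hQg_mem_cubes k x) hk
        exact absurd (hle.trans hB') (not_le.mpr hk₁)
      obtain ⟨km, hkm, hmin⟩ := Int.exists_least_of_bdd
        (P := fun k => t < mavg μ g (Qg D k x)) ⟨k₁ + 1, hbdd⟩ ⟨k₀, hK₀⟩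
      refine Set.mem_biUnion ⟨hQg_mem_cubes km x, hkm, ?_⟩ (mem_Qg D km x)
      intro R hRc htR hsub
      obtain ⟨s, ⟨j, rfl⟩, hRj⟩ := hRc
      have hxR : x ∈ R.toSet := hsub (mem_Qg D km x)
      have hReq : R = Qg D j x := eq_Qg D hRj hxR
      have hjK : t < mavg μ g (Qg D j x) := by rwa [hReq] at htR
      have hkmj : km ≤ j := hmin j hjK
      rw [hReq]; exact Qg_antitone D hkmj x
    · refine Set.iUnion₂_subset fun Q hQ y hy => ?_
      exact lt_of_lt_of_le hQ.2.1 (mavg_le_MD hQ.1 hy)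
  have hScnt : S.Countable := Set.Countable.mono (fun Q hQ => hQ.1) (cubes_countable D)
  have hdisj : ∀ Q ∈ S, ∀ R ∈ S, Q.toSet ≠ R.toSet → Disjoint Q.toSet R.toSet := by
    intro Q hQ R hR hne
    rw [Set.disjoint_left]
    intro z hzQ hzR
    apply hne
    rcases chain_at D hQ.1 hR.1 hzQ hzR with h | h
    · exact Set.Subset.antisymm (hR.2.2 Q hQ.1 hQ.2.1 h) h
    · exact (Set.Subset.antisymm (hQ.2.2 R hR.1 hR.2.1 h) h).symm
  set T : Set (Set (Fin d → ℝ)) := Cube.toSet '' S with hT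
  have hTcnt : T.Countable := hScnt.image _
  haveI := hTcnt.to_subtype
  have hTmeas : ∀ s : T, MeasurableSet (s : Set (Fin d → ℝ)) := by
    rintro ⟨s, ⟨Q, hQ, rfl⟩⟩; exact cube_measurableSet Q
  have hTdisj : Pairwise (Function.onFun Disjoint (fun s : T => (s : Set (Fin d → ℝ)))) := by
    rintro ⟨s, ⟨Q, hQS, rfl⟩⟩ ⟨s', ⟨R, hRS, rfl⟩⟩ hne
    exact hdisj Q hQS R hRS (fun h => hne (Subtype.ext h))
  have hEU : {x | t < MD D μ g x} = ⋃ s : T, (s : Set (Fin d → ℝ)) := by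
    rw [hEeq, ← Set.sUnion_image, Set.sUnion_eq_iUnion]
  have hbound : ∀ s : T, μ (s : Set (Fin d → ℝ)) ≤
      t⁻¹ * ∫⁻ y in (s : Set (Fin d → ℝ)), g y ∂μ := by
    rintro ⟨s, ⟨Q, hQS, rfl⟩⟩
    exact measure_le_of_lt_mavg ht0 htop hQS.2.1
  calc μ {x | t < MD D μ g x} = ∑' s : T, μ (s : Set (Fin d → ℝ)) := by
        rw [hEU]; exact measure_iUnion hTdisj hTmeas
    _ ≤ ∑' s : T, t⁻¹ * ∫⁻ y in (s : Set (Fin d → ℝ)), g y ∂μ := ENNReal.tsum_le_tsum hbound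
    _ = t⁻¹ * ∑' s : T, ∫⁻ y in (s : Set (Fin d → ℝ)), g y ∂μ := ENNReal.tsum_mul_left
    _ = t⁻¹ * ∫⁻ y in ⋃ s : T, (s : Set (Fin d → ℝ)), g y ∂μ := by
        rw [lintegral_iUnion hTmeas hTdisj]
    _ = t⁻¹ * ∫⁻ y in {x | t < MD D μ g x}, g y ∂μ := by rw [← hEU]

lemma MD_add_le (hg₁ : AEMeasurable g₁ μ) (x : Fin d → ℝ) :
    MD D μ (fun y => g₁ y + g₂ y) x ≤ MD D μ g₁ x + MD D μ g₂ x := by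
  refine MD_le fun Q hQ hx => ?_
  have heq : mavg μ (fun y => g₁ y + g₂ y) Q = mavg μ g₁ Q + mavg μ g₂ Q := by
    rw [mavg, mavg, mavg, lintegral_add_left' hg₁.restrict, mul_add]
  rw [heq]
  exact add_le_add (mavg_le_MD hQ hx) (mavg_le_MD hQ hx)

lemma inv_mul_self_le_one (a : ℝ≥0∞) : a⁻¹ * a ≤ 1 := by
  rcases eq_or_ne a 0 with h | h
  · simp [h]
  rcases eq_or_ne a ∞ with h' | h'
  · simp [h']
  · rw [ENNReal.inv_mul_cancel h h']

lemma MD_le_of_le {c : ℝ≥0∞} (hgc : ∀ y, g y ≤ c) (x : Fin d → ℝ) : MD D μ g x ≤ c := by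
  refine MD_le fun Q hQ hx => ?_
  have h1 : ∫⁻ y in Q.toSet, g y ∂μ ≤ c * μ Q.toSet := by
    calc ∫⁻ y in Q.toSet, g y ∂μ ≤ ∫⁻ _ in Q.toSet, c ∂μ := lintegral_mono fun y => hgc y
      _ = c * μ Q.toSet := setLIntegral_const _ _
  calc mavg μ g Q ≤ (μ Q.toSet)⁻¹ * (c * μ Q.toSet) := mul_le_mul_right h1 _
    _ = c * ((μ Q.toSet)⁻¹ * μ Q.toSet) := by ring
    _ ≤ c * 1 := mul_le_mul_right (inv_mul_self_le_one _) c
    _ = c := mul_one c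

lemma holder_cube {pr : ℝ} (hpr : 1 < pr) (s : Set (Fin d → ℝ))
    (hg : AEMeasurable g μ) :
    ∫⁻ y in s, g y ∂μ ≤ (∫⁻ y in s, g y ^ pr ∂μ) ^ (1/pr) * (μ s) ^ (1 - 1/pr) := by
  have hpr0 : pr ≠ 0 := by linarith
  have hpq : pr.HolderConjugate (pr / (pr - 1)) := Real.HolderConjugate.conjExponent hpr
  have h := ENNReal.lintegral_mul_le_Lp_mul_Lq (μ.restrict s) hpq hg.restrict
    (aemeasurable_const (b := (1:ℝ≥0∞)))
  simp only [Pi.mul_apply, mul_one, one_mul, ENNReal.one_rpow, lintegral_const,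
    Measure.restrict_apply MeasurableSet.univ, Set.univ_inter] at h
  have hexp : 1 / (pr / (pr - 1)) = 1 - 1/pr := by
    field_simp
  rwa [hexp] at h

/-! ### powers of two in `ℝ≥0∞` -/

def pw (r : ℝ) : ℝ≥0∞ := (2 : ℝ≥0∞) ^ r

lemma pw_pos (r : ℝ) : 0 < pw r := ENNReal.rpow_pos (by norm_num) (by norm_num)

lemma pw_ne_zero (r : ℝ) : pw r ≠ 0 := (pw_pos r).ne'

lemma pw_neg (r : ℝ) : pw (-r) = (pw r)⁻¹ := ENNReal.rpow_neg 2 r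

lemma pw_ne_top (r : ℝ) : pw r ≠ ∞ := by
  rcases le_or_gt 0 r with h | h
  · exact ENNReal.rpow_ne_top_of_nonneg h (by norm_num)
  · have : pw r = (pw (-r))⁻¹ := by rw [pw_neg, inv_inv]
    rw [this, Ne, ENNReal.inv_eq_top]
    exact pw_ne_zero _

lemma pw_add (a b : ℝ) : pw (a + b) = pw a * pw b :=
  ENNReal.rpow_add a b (by norm_num) (by norm_num)

lemma pw_mono {a b : ℝ} (h : a ≤ b) : pw a ≤ pw b :=
  ENNReal.rpow_le_rpow_of_exponent_le one_le_two h

lemma pw_strict {a b : ℝ} (h : a < b) : pw a < pw b :=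
  ENNReal.rpow_lt_rpow_of_exponent_lt one_lt_two (by norm_num) h

lemma pw_zero : pw 0 = 1 := ENNReal.rpow_zero

lemma pw_one : pw 1 = 2 := ENNReal.rpow_one 2

lemma pw_rpow (a b : ℝ) : pw a ^ b = pw (a * b) := (ENNReal.rpow_mul 2 a b).symm

lemma exists_scale {a : ℝ≥0∞} (h0 : a ≠ 0) (htop : a ≠ ∞) :
    ∃ m : ℤ, pw m < a ∧ a ≤ pw ((m : ℝ) + 1) := by
  obtain ⟨m, hm⟩ := ENNReal.exists_mem_Ioc_zpow h0 htop one_lt_two (by norm_num)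
  refine ⟨m, ?_, ?_⟩
  · rw [pw, ENNReal.rpow_intCast]; exact hm.1
  · rw [pw, show ((m : ℝ) + 1) = ((m + 1 : ℤ) : ℝ) by push_cast; ring, ENNReal.rpow_intCast]
    exact hm.2

/-- Claim A: pointwise layer-cake lower bound -/
lemma rpow_le_tsum_pw {pr : ℝ} (hpr : 0 < pr) (a : ℝ≥0∞) :
    a ^ pr ≤ pw pr * ∑' n : ℤ, (if pw (n : ℝ) < a then pw (pr * (n : ℝ)) else 0) := by
  rcases eq_or_ne a 0 with rfl | h0
  · rw [ENNReal.zero_rpow_of_pos hpr]; exact zero_le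
  rcases eq_or_ne a ∞ with rfl | htop
  · have hsum : ∑' n : ℤ, (if pw (n : ℝ) < (∞ : ℝ≥0∞) then pw (pr * (n : ℝ)) else 0) = ∞ := by
      rw [eq_top_iff]
      calc (∞ : ℝ≥0∞) = ∑' _ : ℕ, (1 : ℝ≥0∞) :=
            (ENNReal.tsum_const_eq_top_of_ne_zero one_ne_zero).symm
        _ ≤ ∑' j : ℕ, (if pw ((j : ℤ) : ℝ) < (∞ : ℝ≥0∞) then pw (pr * ((j : ℤ) : ℝ)) else 0) := by
            refine ENNReal.tsum_le_tsum fun j => ?_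
            rw [if_pos (pw_ne_top _).lt_top, ← pw_zero]
            exact pw_mono (by positivity)
        _ ≤ ∑' n : ℤ, (if pw (n : ℝ) < (∞ : ℝ≥0∞) then pw (pr * (n : ℝ)) else 0) :=
            ENNReal.tsum_comp_le_tsum_of_injective (fun x y h => by exact_mod_cast h) _
    rw [ENNReal.top_rpow_of_pos hpr, hsum, ENNReal.mul_top (pw_ne_zero pr)]
  · obtain ⟨m, hm1, hm2⟩ := exists_scale h0 htop
    have h1 : a ^ pr ≤ pw pr * pw (pr * (m : ℝ)) := by
      calc a ^ pr ≤ (pw ((m : ℝ) + 1)) ^ pr := ENNReal.rpow_le_rpow hm2 hpr.le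
        _ = pw (((m : ℝ) + 1) * pr) := pw_rpow _ _
        _ = pw (pr + pr * (m : ℝ)) := by rw [show ((m : ℝ) + 1) * pr = pr + pr * (m : ℝ) by ring]
        _ = pw pr * pw (pr * (m : ℝ)) := pw_add _ _
    refine h1.trans (mul_le_mul_right ?_ _)
    calc pw (pr * (m : ℝ)) = (if pw ((m : ℤ) : ℝ) < a then pw (pr * ((m : ℤ) : ℝ)) else 0) := by
          rw [if_pos hm1]
      _ ≤ ∑' n : ℤ, (if pw (n : ℝ) < a then pw (pr * (n : ℝ)) else 0) := ENNReal.le_tsum m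

/-- Claim B: summation of the tail weights -/
lemma tsum_pw_le {pr : ℝ} (hpr : 1 < pr) (a : ℝ≥0∞) :
    ∑' n : ℤ, (if pw ((n : ℝ) - 1) < a then pw (pr * (n : ℝ)) * (pw ((n : ℝ) - 1))⁻¹ * a else 0)
      ≤ (pw pr * (1 - pw (1 - pr))⁻¹) * a ^ pr := by
  have hgeo : pw (1 - pr) < 1 := by
    rw [← pw_zero]; exact pw_strict (by linarith)
  have hKne0 : (1 - pw (1 - pr))⁻¹ ≠ 0 := by
    rw [Ne, ENNReal.inv_eq_zero]
    exact (lt_of_le_of_lt tsub_le_self (by norm_num : (1:ℝ≥0∞) < ∞)).ne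
  rcases eq_or_ne a 0 with rfl | h0
  · simp
  rcases eq_or_ne a ∞ with rfl | htop
  · rw [ENNReal.top_rpow_of_pos (by linarith), ENNReal.mul_top
      (mul_ne_zero (pw_ne_zero pr) hKne0)]
    exact le_top
  · obtain ⟨m, hm1, hm2⟩ := exists_scale h0 htop
    have hterm : ∀ n : ℤ,
        (if pw ((n : ℝ) - 1) < a then pw (pr * (n : ℝ)) * (pw ((n : ℝ) - 1))⁻¹ * a else 0)
          ≤ (if n ≤ m + 1 then pw ((pr - 1) * (n : ℝ) + 1) * a else 0) := by
      intro n
      by_cases hc : pw ((n : ℝ) - 1) < a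
      · rw [if_pos hc]
        have hn : n ≤ m + 1 := by
          by_contra hcon
          push_neg at hcon
          have hcast : (m : ℝ) + 1 ≤ (n : ℝ) - 1 := by
            have h' : (m + 2 : ℤ) ≤ n := by omega
            have : ((m + 2 : ℤ) : ℝ) ≤ (n : ℝ) := by exact_mod_cast h'
            push_cast at this; linarith
          exact absurd (lt_of_le_of_lt (le_trans hm2 (pw_mono hcast)) hc) (lt_irrefl a)
        rw [if_pos hn]
        have hid : pw (pr * (n : ℝ)) * (pw ((n : ℝ) - 1))⁻¹ = pw ((pr - 1) * (n : ℝ) + 1) := by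
          rw [← pw_neg, ← pw_add]
          congr 1; ring
        rw [hid]
      · rw [if_neg hc]; exact zero_le
    refine (ENNReal.tsum_le_tsum hterm).trans ?_
    have hinj : Function.Injective (fun j : ℕ => m + 1 - (j : ℤ)) := by
      intro x y h
      simp only at h
      omega
    have hsupp : Function.support
        (fun n : ℤ => (if n ≤ m + 1 then pw ((pr - 1) * (n : ℝ) + 1) * a else 0))
          ⊆ Set.range (fun j : ℕ => m + 1 - (j : ℤ)) := by
      intro n hn
      rcases le_or_gt n (m + 1) with h | h
      · exact ⟨(m + 1 - n).toNat, by simp only; omega⟩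
      · exact absurd (if_neg (not_le.mpr h)) hn
    rw [← Function.Injective.tsum_eq hinj hsupp]
    have hsimp : ∀ j : ℕ,
        (if m + 1 - (j : ℤ) ≤ m + 1 then pw ((pr - 1) * ((m + 1 - (j : ℤ) : ℤ) : ℝ) + 1) * a else 0)
          = (pw ((pr - 1) * ((m : ℝ) + 1) + 1) * a) * pw (1 - pr) ^ j := by
      intro j
      rw [if_pos (by omega)]
      have hc : ((m + 1 - (j : ℤ) : ℤ) : ℝ) = (m : ℝ) + 1 - (j : ℕ) := by push_cast; ring
      rw [hc]
      have : pw ((pr - 1) * ((m : ℝ) + 1 - (j : ℕ)) + 1)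
          = pw ((pr - 1) * ((m : ℝ) + 1) + 1) * pw ((1 - pr) * (j : ℕ)) := by
        rw [← pw_add]; congr 1; ring
      rw [this]
      conv_rhs => rw [← ENNReal.rpow_natCast (pw (1 - pr)) j, pw_rpow]
      ring
    calc ∑' j : ℕ, (if m + 1 - (j : ℤ) ≤ m + 1 then
            pw ((pr - 1) * ((m + 1 - (j : ℤ) : ℤ) : ℝ) + 1) * a else 0)
        = ∑' j : ℕ, (pw ((pr - 1) * ((m : ℝ) + 1) + 1) * a) * pw (1 - pr) ^ j := by
          exact tsum_congr hsimp
      _ = (pw ((pr - 1) * ((m : ℝ) + 1) + 1) * a) * (1 - pw (1 - pr))⁻¹ := by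
          rw [ENNReal.tsum_mul_left, ENNReal.tsum_geometric]
      _ ≤ ((pw pr * a ^ (pr - 1)) * a) * (1 - pw (1 - pr))⁻¹ := by
          refine mul_le_mul_left (mul_le_mul_left ?_ a) _
          have h1 : pw ((pr - 1) * ((m : ℝ) + 1) + 1) = 2 * (pw ((m : ℝ) + 1)) ^ (pr - 1) := by
            rw [pw_rpow, ← pw_one, ← pw_add]
            congr 1; ring
          have h2 : pw ((m : ℝ) + 1) ≤ 2 * a := by
            rw [show (m : ℝ) + 1 = 1 + (m : ℝ) by ring, pw_add, pw_one]
            exact mul_le_mul_right hm1.le 2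
          rw [h1]
          calc 2 * (pw ((m : ℝ) + 1)) ^ (pr - 1) ≤ 2 * (2 * a) ^ (pr - 1) := by
                exact mul_le_mul_right (ENNReal.rpow_le_rpow h2 (by linarith)) 2
            _ = 2 * (2 ^ (pr - 1) * a ^ (pr - 1)) := by
                rw [ENNReal.mul_rpow_of_nonneg _ _ (by linarith)]
            _ = pw pr * a ^ (pr - 1) := by
                rw [← mul_assoc, ← pw_one, pw_rpow, ← pw_add]
                rw [show 1 + 1 * (pr - 1) = pr by ring]
      _ = (pw pr * (1 - pw (1 - pr))⁻¹) * a ^ pr := by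
          have ha : a ^ (pr - 1) * a = a ^ pr := by
            nth_rewrite 2 [← ENNReal.rpow_one a]
            rw [← ENNReal.rpow_add _ _ h0 htop]
            congr 1
            ring
          rw [mul_assoc (pw pr), ha]
          ring

lemma measure_cube_le {pr : ℝ} (hpr : 1 < pr) (hg : AEMeasurable g μ) {t M : ℝ≥0∞}
    (ht0 : t ≠ 0) (hM : ∫⁻ y, g y ^ pr ∂μ ≤ M) {Q : Cube d}
    (hlt : t < mavg μ g Q) : μ Q.toSet ≤ (t⁻¹ * M ^ (1/pr)) ^ pr := by
  have hpr0 : (0:ℝ) < pr := by linarith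
  rcases eq_or_ne (μ Q.toSet) 0 with h0 | h0
  · rw [h0]; exact zero_le
  rcases eq_or_ne (μ Q.toSet) ∞ with hT | hT
  · exfalso; rw [mavg, hT] at hlt; simp at hlt
  have hH : ∫⁻ y in Q.toSet, g y ∂μ ≤ M ^ (1/pr) * (μ Q.toSet) ^ (1 - 1/pr) := by
    refine le_trans (holder_cube hpr Q.toSet hg) ?_
    refine mul_le_mul_left (ENNReal.rpow_le_rpow ?_ (by positivity)) _
    exact le_trans (lintegral_mono' Measure.restrict_le_self le_rfl) hM
  have h1 : t < M ^ (1/pr) * (μ Q.toSet) ^ (-(1/pr)) := by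
    refine lt_of_lt_of_le hlt ?_
    rw [mavg]
    refine le_trans (mul_le_mul_right hH _) (le_of_eq ?_)
    rw [← ENNReal.rpow_neg_one (μ Q.toSet)]
    calc (μ Q.toSet) ^ (-1:ℝ) * (M ^ (1/pr) * (μ Q.toSet) ^ (1 - 1/pr))
        = M ^ (1/pr) * ((μ Q.toSet) ^ (-1:ℝ) * (μ Q.toSet) ^ (1 - 1/pr)) := by ring
      _ = M ^ (1/pr) * (μ Q.toSet) ^ ((-1:ℝ) + (1 - 1/pr)) := by
          rw [← ENNReal.rpow_add _ _ h0 hT]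
      _ = M ^ (1/pr) * (μ Q.toSet) ^ (-(1/pr)) := by
          rw [show (-1:ℝ) + (1 - 1/pr) = -(1/pr) by ring]
  have hA0 : (μ Q.toSet) ^ (1/pr) ≠ 0 := (ENNReal.rpow_pos (pos_iff_ne_zero.mpr h0) hT).ne'
  have hAt : (μ Q.toSet) ^ (1/pr) ≠ ∞ := ENNReal.rpow_ne_top_of_nonneg (by positivity) hT
  have h2 : t < M ^ (1/pr) / (μ Q.toSet) ^ (1/pr) := by
    rwa [ENNReal.rpow_neg, ← div_eq_mul_inv] at h1
  have h3 : t * (μ Q.toSet) ^ (1/pr) ≤ M ^ (1/pr) :=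
    ((ENNReal.lt_div_iff_mul_lt (Or.inl hA0) (Or.inl hAt)).mp h2).le
  have h4 : (μ Q.toSet) ^ (1/pr) ≤ t⁻¹ * M ^ (1/pr) := by
    rw [← ENNReal.div_eq_inv_mul]
    exact (ENNReal.le_div_iff_mul_le (Or.inl ht0) (Or.inl (h2.trans_le le_top).ne)).mpr
      (by rw [mul_comm]; exact h3)
  calc μ Q.toSet = ((μ Q.toSet) ^ (1/pr)) ^ pr := by
        rw [← ENNReal.rpow_mul, one_div, inv_mul_cancel₀ (ne_of_gt hpr0), ENNReal.rpow_one]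
    _ ≤ (t⁻¹ * M ^ (1/pr)) ^ pr := ENNReal.rpow_le_rpow h4 hpr0.le

theorem MD_strong {pr : ℝ} (hpr : 1 < pr) (hg : Measurable g)
    (hquad : ∀ x, μ (D.quadrant x) = ∞) :
    ∫⁻ x, MD D μ g x ^ pr ∂μ ≤
      (pw pr * (pw pr * (1 - pw (1 - pr))⁻¹)) * ∫⁻ x, g x ^ pr ∂μ := by
  have hpr0 : (0:ℝ) < pr := by linarith
  have hgeo : pw (1 - pr) < 1 := by
    rw [← pw_zero]; exact pw_strict (by linarith)
  have hK0 : (1 - pw (1 - pr))⁻¹ ≠ 0 := by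
    rw [Ne, ENNReal.inv_eq_zero]
    exact (lt_of_le_of_lt tsub_le_self (by norm_num : (1:ℝ≥0∞) < ∞)).ne
  have hKtop : (1 - pw (1 - pr))⁻¹ ≠ ∞ := by
    rw [Ne, ENNReal.inv_eq_top]
    exact (tsub_pos_of_lt hgeo).ne'
  have hCne0 : (pw pr * (pw pr * (1 - pw (1 - pr))⁻¹)) ≠ 0 :=
    mul_ne_zero (pw_ne_zero _) (mul_ne_zero (pw_ne_zero _) hK0)
  rcases eq_or_ne (∫⁻ x, g x ^ pr ∂μ) ∞ with hN | hN
  · rw [hN, ENNReal.mul_top hCne0]; exact le_top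
  set E : ℤ → Set (Fin d → ℝ) := fun n => {x | pw (n:ℝ) < MD D μ g x} with hE
  have hstep2 : ∫⁻ x, MD D μ g x ^ pr ∂μ ≤
      pw pr * ∑' n : ℤ, pw (pr * (n:ℝ)) * μ (E n) := by
    have hle1 : ∫⁻ x, MD D μ g x ^ pr ∂μ ≤
        ∫⁻ x, pw pr * ∑' n : ℤ, (if pw (n:ℝ) < MD D μ g x then pw (pr * (n:ℝ)) else 0) ∂μ :=
      lintegral_mono fun x => rpow_le_tsum_pw hpr0 _
    refine hle1.trans ?_
    rw [lintegral_const_mul' _ _ (pw_ne_top pr)]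
    refine mul_le_mul_right (le_of_eq ?_) _
    have hind : ∀ n : ℤ, (fun x => if pw (n:ℝ) < MD D μ g x then pw (pr * (n:ℝ)) else 0)
        = (E n).indicator (fun _ => pw (pr * (n:ℝ))) := by
      intro n; funext x
      by_cases hx : x ∈ E n
      · rw [Set.indicator_of_mem hx]; exact if_pos hx
      · rw [Set.indicator_of_notMem hx]; exact if_neg hx
    calc ∫⁻ x, ∑' n : ℤ, (if pw (n:ℝ) < MD D μ g x then pw (pr * (n:ℝ)) else 0) ∂μ
        = ∑' n : ℤ, ∫⁻ x, (if pw (n:ℝ) < MD D μ g x then pw (pr * (n:ℝ)) else 0) ∂μ := by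
          rw [lintegral_tsum]
          intro n
          rw [hind n]
          exact (measurable_const.indicator (measurableSet_superlevel _)).aemeasurable
      _ = ∑' n : ℤ, pw (pr * (n:ℝ)) * μ (E n) := by
          refine tsum_congr fun n => ?_
          rw [hind n, lintegral_indicator (measurableSet_superlevel _), setLIntegral_const]
  have hstep3 : ∀ n : ℤ, μ (E n) ≤
      (pw ((n:ℝ) - 1))⁻¹ * ∫⁻ x, ({y | pw ((n:ℝ)-1) < g y}.indicator g) x ∂μ := by
    intro n
    set s : Set (Fin d → ℝ) := {y | pw ((n:ℝ)-1) < g y} with hs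
    have hsm : MeasurableSet s := measurableSet_lt measurable_const hg
    set gb : (Fin d → ℝ) → ℝ≥0∞ := s.indicator g with hgb
    set gs : (Fin d → ℝ) → ℝ≥0∞ := sᶜ.indicator g with hgs
    have hsub : E n ⊆ {x | pw ((n:ℝ)-1) < MD D μ gb x} := by
      intro x hx
      by_contra hcon
      simp only [Set.mem_setOf_eq, not_lt] at hcon
      have h2 : MD D μ gs x ≤ pw ((n:ℝ)-1) := by
        refine MD_le_of_le (fun y => ?_) x
        by_cases hy : y ∈ s
        · rw [hgs, Set.indicator_of_notMem (Set.notMem_compl_iff.mpr hy)]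
          exact zero_le
        · rw [hgs, Set.indicator_of_mem (Set.mem_compl hy)]
          have hy' : ¬ (pw ((n:ℝ)-1) < g y) := hy
          exact not_lt.mp hy'
      have hMD : MD D μ g x ≤ pw (n:ℝ) := by
        have hsplit : g = fun y => gb y + gs y := by
          funext y
          by_cases hy : y ∈ s
          · rw [hgb, hgs, Set.indicator_of_mem hy,
              Set.indicator_of_notMem (Set.notMem_compl_iff.mpr hy), add_zero]
          · rw [hgb, hgs, Set.indicator_of_notMem hy,
              Set.indicator_of_mem (Set.mem_compl hy), zero_add]
        calc MD D μ g x = MD D μ (fun y => gb y + gs y) x := by rw [← hsplit]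
          _ ≤ MD D μ gb x + MD D μ gs x := MD_add_le ((hg.indicator hsm).aemeasurable) x
          _ ≤ pw ((n:ℝ)-1) + pw ((n:ℝ)-1) := add_le_add hcon h2
          _ = pw (n:ℝ) := by
              rw [← two_mul, ← pw_one, ← pw_add,
                show (1:ℝ) + ((n:ℝ)-1) = (n:ℝ) by ring]
      have hnot : ¬ (pw (n:ℝ) < MD D μ g x) := not_lt.mpr hMD
      exact hnot hx
    have hgbm : AEMeasurable gb μ := (hg.indicator hsm).aemeasurable
    have hB : ∀ Q ∈ D.cubes, pw ((n:ℝ)-1) < mavg μ gb Q →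
        μ Q.toSet ≤ ((pw ((n:ℝ)-1))⁻¹ * (∫⁻ x, g x ^ pr ∂μ) ^ (1/pr)) ^ pr := by
      intro Q hQ hlt
      refine measure_cube_le hpr hgbm (pw_ne_zero _) ?_ hlt
      refine lintegral_mono fun y => ?_
      exact ENNReal.rpow_le_rpow (Set.indicator_le_self s g y) hpr0.le
    have hBne : ((pw ((n:ℝ)-1))⁻¹ * (∫⁻ x, g x ^ pr ∂μ) ^ (1/pr)) ^ pr ≠ ∞ := by
      refine ENNReal.rpow_ne_top_of_nonneg hpr0.le (ENNReal.mul_ne_top ?_ ?_)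
      · rw [Ne, ENNReal.inv_eq_top]; exact pw_ne_zero _
      · exact ENNReal.rpow_ne_top_of_nonneg (by positivity) hN
    calc μ (E n) ≤ μ {x | pw ((n:ℝ)-1) < MD D μ gb x} := measure_mono hsub
      _ ≤ (pw ((n:ℝ)-1))⁻¹ * ∫⁻ x in {x | pw ((n:ℝ)-1) < MD D μ gb x}, gb x ∂μ :=
          weak_bound hquad (pw_ne_zero _) (pw_ne_top _) hBne hB
      _ ≤ (pw ((n:ℝ)-1))⁻¹ * ∫⁻ x, gb x ∂μ :=
          mul_le_mul_right (lintegral_mono' Measure.restrict_le_self le_rfl) _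
  have hsum : (∑' n : ℤ, pw (pr * (n:ℝ)) * μ (E n)) ≤
      (pw pr * (1 - pw (1-pr))⁻¹) * ∫⁻ x, g x ^ pr ∂μ := by
    calc ∑' n : ℤ, pw (pr * (n:ℝ)) * μ (E n)
        ≤ ∑' n : ℤ, pw (pr * (n:ℝ)) *
            ((pw ((n:ℝ)-1))⁻¹ * ∫⁻ x, ({y | pw ((n:ℝ)-1) < g y}.indicator g) x ∂μ) :=
          ENNReal.tsum_le_tsum fun n => mul_le_mul_right (hstep3 n) _
      _ = ∑' n : ℤ, ∫⁻ x,
            (if pw ((n:ℝ)-1) < g x then pw (pr * (n:ℝ)) * (pw ((n:ℝ)-1))⁻¹ * g x else 0) ∂μ := by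
          refine tsum_congr fun n => ?_
          rw [← mul_assoc, ← lintegral_const_mul' _ _
            (ENNReal.mul_ne_top (pw_ne_top _) (by rw [Ne, ENNReal.inv_eq_top]; exact pw_ne_zero _))]
          refine lintegral_congr fun x => ?_
          by_cases hx : pw ((n:ℝ)-1) < g x
          · rw [if_pos hx, Set.indicator_of_mem (show x ∈ {y | pw ((n:ℝ)-1) < g y} from hx)]
          · rw [if_neg hx,
              Set.indicator_of_notMem (show x ∉ {y | pw ((n:ℝ)-1) < g y} from hx), mul_zero]
      _ = ∫⁻ x, ∑' n : ℤ,
            (if pw ((n:ℝ)-1) < g x then pw (pr * (n:ℝ)) * (pw ((n:ℝ)-1))⁻¹ * g x else 0) ∂μ := by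
          rw [← lintegral_tsum]
          intro n
          have hform : (fun x => if pw ((n:ℝ)-1) < g x then pw (pr * (n:ℝ)) * (pw ((n:ℝ)-1))⁻¹ * g x else 0)
              = {y | pw ((n:ℝ)-1) < g y}.indicator
                  (fun x => pw (pr * (n:ℝ)) * (pw ((n:ℝ)-1))⁻¹ * g x) := by
            funext x
            by_cases hx : pw ((n:ℝ)-1) < g x
            · rw [if_pos hx, Set.indicator_of_mem (show x ∈ {y | pw ((n:ℝ)-1) < g y} from hx)]
            · rw [if_neg hx,
                Set.indicator_of_notMem (show x ∉ {y | pw ((n:ℝ)-1) < g y} from hx)]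
          rw [hform]
          exact ((measurable_const.mul hg).indicator
            (measurableSet_lt measurable_const hg)).aemeasurable
      _ ≤ ∫⁻ x, (pw pr * (1 - pw (1-pr))⁻¹) * g x ^ pr ∂μ :=
          lintegral_mono fun x => tsum_pw_le hpr (g x)
      _ = (pw pr * (1 - pw (1-pr))⁻¹) * ∫⁻ x, g x ^ pr ∂μ :=
          lintegral_const_mul' _ _ (ENNReal.mul_ne_top (pw_ne_top _) hKtop)
  refine hstep2.trans ?_
  calc pw pr * ∑' n : ℤ, pw (pr * (n:ℝ)) * μ (E n)
      ≤ pw pr * ((pw pr * (1 - pw (1-pr))⁻¹) * ∫⁻ x, g x ^ pr ∂μ) := mul_le_mul_right hsum _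
    _ = (pw pr * (pw pr * (1 - pw (1 - pr))⁻¹)) * ∫⁻ x, g x ^ pr ∂μ := by ring

lemma rpow_mul_rpow_neg_le_one (A : ℝ≥0∞) (x : ℝ) : A ^ x * A ^ (-x) ≤ 1 := by
  rcases eq_or_ne A 0 with rfl | h0
  · rcases lt_trichotomy x 0 with h | h | h
    · rw [ENNReal.zero_rpow_of_pos (by linarith : 0 < -x), mul_zero]; exact zero_le
    · simp [h]
    · rw [ENNReal.zero_rpow_of_pos h, zero_mul]; exact zero_le
  rcases eq_or_ne A ∞ with rfl | ht
  · rcases lt_trichotomy x 0 with h | h | h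
    · rw [ENNReal.top_rpow_of_neg h, zero_mul]; exact zero_le
    · simp [h]
    · rw [ENNReal.top_rpow_of_neg (by linarith : -x < 0), mul_zero]; exact zero_le
  · rw [← ENNReal.rpow_add _ _ h0 ht, add_neg_cancel, ENNReal.rpow_zero]

lemma interp_term {pr qr : ℝ} (hpr : 1 < pr) (hq : pr ≤ qr)
    {A I N : ℝ≥0∞} (hNt : N ≠ ∞) (hI : I ≤ N * A ^ (1 - 1/pr)) :
    A ^ (1/pr - 1/qr - 1) * I ≤ ((A⁻¹ * I) ^ (pr/qr)) * N ^ (1 - pr/qr) := by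
  have hpr0 : (0:ℝ) < pr := by linarith
  have hqr0 : (0:ℝ) < qr := lt_of_lt_of_le hpr0 hq
  have hθpos : (0:ℝ) < pr/qr := by positivity
  have hθle : pr/qr ≤ 1 := by rw [div_le_one hqr0]; exact hq
  have hpinv : 1/pr < 1 := by rw [div_lt_one hpr0]; exact hpr
  have hqinv : (0:ℝ) ≤ 1/qr := by positivity
  rcases eq_or_ne A 0 with rfl | hA0
  · have hI0 : I = 0 := by
      refine le_antisymm (hI.trans (le_of_eq ?_)) (zero_le)
      rw [ENNReal.zero_rpow_of_pos (by linarith : (0:ℝ) < 1 - 1/pr), mul_zero]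
    rw [hI0, mul_zero]; exact zero_le
  rcases eq_or_ne A ∞ with rfl | hAt
  · rw [ENNReal.top_rpow_of_neg (by linarith : 1/pr - 1/qr - 1 < 0), zero_mul]
    exact zero_le
  rcases eq_or_ne I 0 with rfl | hI0
  · rw [mul_zero]; exact zero_le
  have hIt : I ≠ ∞ :=
    ne_top_of_le_ne_top
      (ENNReal.mul_ne_top hNt (ENNReal.rpow_ne_top_of_nonneg (by linarith) hAt)) hI
  have key : (A⁻¹ * I) ^ (pr/qr) = A ^ (-(pr/qr)) * I ^ (pr/qr) := by
    rw [ENNReal.mul_rpow_of_nonneg _ _ hθpos.le, ← ENNReal.rpow_neg_one A,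
      ← ENNReal.rpow_mul, show (-1:ℝ) * (pr/qr) = -(pr/qr) by ring]
  rw [key]
  have hIsplit : I = I ^ (pr/qr) * I ^ (1 - pr/qr) := by
    rw [← ENNReal.rpow_add _ _ hI0 hIt, show pr/qr + (1 - pr/qr) = 1 by ring,
      ENNReal.rpow_one]
  calc A ^ (1/pr - 1/qr - 1) * I
      = I ^ (pr/qr) * (A ^ (1/pr - 1/qr - 1) * I ^ (1 - pr/qr)) := by
        conv_lhs => rw [hIsplit]
        ring
    _ ≤ I ^ (pr/qr) * (A ^ (1/pr - 1/qr - 1) * (N * A ^ (1 - 1/pr)) ^ (1 - pr/qr)) := by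
        refine mul_le_mul_right (mul_le_mul_right ?_ _) _
        exact ENNReal.rpow_le_rpow hI (by linarith)
    _ = I ^ (pr/qr) * (N ^ (1 - pr/qr) * A ^ (-(pr/qr))) := by
        rw [ENNReal.mul_rpow_of_nonneg _ _ (by linarith : (0:ℝ) ≤ 1 - pr/qr),
          ← ENNReal.rpow_mul A]
        rw [show A ^ (1/pr - 1/qr - 1) * (N ^ (1 - pr/qr) * A ^ ((1 - 1/pr) * (1 - pr/qr)))
            = N ^ (1 - pr/qr) * (A ^ (1/pr - 1/qr - 1) * A ^ ((1 - 1/pr) * (1 - pr/qr))) by ring]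
        rw [← ENNReal.rpow_add _ _ hA0 hAt,
          show 1/pr - 1/qr - 1 + (1 - 1/pr) * (1 - pr/qr) = -(pr/qr) by field_simp; ring]
    _ = A ^ (-(pr/qr)) * I ^ (pr/qr) * N ^ (1 - pr/qr) := by ring

lemma quadrant_measure_top {D : DyadicLattice d} {w : (Fin d → ℝ) → ℝ}
    (hquad : ∀ x, wInt w (D.quadrant x) = ∞) :
    ∀ x, wMeasure w (D.quadrant x) = ∞ := by
  intro x
  have hm : MeasurableSet (D.quadrant x) := by
    rw [quadrant_eq]
    exact MeasurableSet.iUnion fun k => cube_measurableSet _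
  rw [wMeasure, withDensity_apply _ hm]
  exact hquad x

lemma wInt_eq_wMeasure {w : (Fin d → ℝ) → ℝ} {s : Set (Fin d → ℝ)} (hs : MeasurableSet s) :
    wInt w s = wMeasure w s := (withDensity_apply _ hs).symm

lemma setLint_density {w : (Fin d → ℝ) → ℝ}
    (hw : AEMeasurable (fun x => ENNReal.ofReal (w x)) volume)
    {s : Set (Fin d → ℝ)} (hs : MeasurableSet s) {h : (Fin d → ℝ) → ℝ≥0∞}
    (hh : AEMeasurable h (wMeasure w)) :
    ∫⁻ y in s, h y * ENNReal.ofReal (w y) ∂volume = ∫⁻ y in s, h y ∂(wMeasure w) := by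
  have h1 : ∫⁻ y in s, h y ∂(wMeasure w)
      = ∫⁻ y, ((fun x => ENNReal.ofReal (w x)) * h) y ∂(volume.restrict s) := by
    rw [wMeasure, restrict_withDensity hs,
      lintegral_withDensity_eq_lintegral_mul₀' hw.restrict ?_]
    rw [← restrict_withDensity hs]
    exact hh.restrict
  rw [h1]
  exact lintegral_congr fun y => mul_comm _ _

end DyadicAux

end Aux2

open DyadicAux in
/-- strong type estimate for the weighted dyadic fractional maximal operator. -/
theorem strong_type_weighted_dyadic_fractional_maximal
    {d : ℕ} (hd : 0 < d)
    (p q : ℝ≥0∞) (hp : 1 < p) (hpq : p ≤ q)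
    (α : ℝ) (hα0 : 0 ≤ α) (hαd : α < d)
    (hexp : p⁻¹ = q⁻¹ + ENNReal.ofReal (α / d)) :
    ∃ C : ℝ≥0∞, C ≠ ∞ ∧
      ∀ (D : DyadicLattice d) (w : (Fin d → ℝ) → ℝ), IsWeight w →
        (∀ x : Fin d → ℝ, wInt w (D.quadrant x) = ∞) →
        ∀ f : (Fin d → ℝ) → ℝ, MemLp f p (wMeasure w) →
          eLpNormENN (MwDyadic D α w f) q (wMeasure w) ≤ C * eLpNorm f p (wMeasure w) := by
  classical
  have hp0 : p ≠ 0 := (lt_trans zero_lt_one hp).ne'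
  have hd0 : (0:ℝ) < (d:ℝ) := by exact_mod_cast hd
  rcases eq_or_ne q ∞ with rfl | hqtop
  · rcases eq_or_ne p ∞ with rfl | hptop
    · -- p = q = ∞, hence α = 0
      have hα' : ENNReal.ofReal (α / d) = 0 := by simpa using hexp.symm
      have hα0' : α = 0 := by
        have h1 : α / (d:ℝ) ≤ 0 := ENNReal.ofReal_eq_zero.mp hα'
        have h2 : (0:ℝ) ≤ α / (d:ℝ) := div_nonneg hα0 hd0.le
        rcases div_eq_zero_iff.mp (le_antisymm h1 h2) with h | h
        · exact h
        · exact absurd h hd0.ne'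
      refine ⟨1, one_ne_top, ?_⟩
      intro D w hw hquad f hf
      set μ := wMeasure w with hμ
      have hwm : AEMeasurable (fun x => ENNReal.ofReal (w x)) volume :=
        ENNReal.measurable_ofReal.comp_aemeasurable hw.1.aestronglyMeasurable.aemeasurable
      have hnn : AEMeasurable (fun x => (‖f x‖₊ : ℝ≥0∞)) μ := hf.aestronglyMeasurable.enorm
      rw [one_mul, eLpNorm_exponent_top]
      simp only [eLpNormENN, if_pos rfl]
      refine essSup_le_of_ae_le _ (ae_of_all _ fun x => ?_)
      simp only [MwDyadic]
      refine iSup_le fun Q => iSup_le fun hQ => iSup_le fun hx => ?_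
      rw [hα0', zero_div, zero_sub, wInt_eq_wMeasure (cube_measurableSet Q),
        setLint_density hwm (cube_measurableSet Q) hnn, ENNReal.rpow_neg_one]
      have hb : ∫⁻ y in Q.toSet, (‖f y‖₊ : ℝ≥0∞) ∂μ ≤ eLpNormEssSup f μ * μ Q.toSet := by
        refine le_trans (lintegral_mono_ae (ae_restrict_of_ae ?_))
          (le_of_eq (setLIntegral_const _ _))
        exact ENNReal.ae_le_essSup _
      calc (μ Q.toSet)⁻¹ * ∫⁻ y in Q.toSet, (‖f y‖₊ : ℝ≥0∞) ∂μ
          ≤ (μ Q.toSet)⁻¹ * (eLpNormEssSup f μ * μ Q.toSet) := mul_le_mul_right hb _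
        _ = eLpNormEssSup f μ * ((μ Q.toSet)⁻¹ * μ Q.toSet) := by ring
        _ ≤ eLpNormEssSup f μ * 1 := mul_le_mul_right (inv_mul_self_le_one _) _
        _ = eLpNormEssSup f μ := mul_one _
    · -- q = ∞, p < ∞
      have hpr : 1 < p.toReal := by
        have h := ENNReal.toReal_strict_mono hptop hp
        simpa using h
      have hαd' : α / (d:ℝ) = 1 / p.toReal := by
        have h1 : p⁻¹ = ENNReal.ofReal (α / d) := by simpa using hexp
        have h2 := congrArg ENNReal.toReal h1
        rw [ENNReal.toReal_inv, ENNReal.toReal_ofReal (div_nonneg hα0 hd0.le)] at h2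
        rw [← h2, one_div]
      refine ⟨1, one_ne_top, ?_⟩
      intro D w hw hquad f hf
      set μ := wMeasure w with hμ
      have hwm : AEMeasurable (fun x => ENNReal.ofReal (w x)) volume :=
        ENNReal.measurable_ofReal.comp_aemeasurable hw.1.aestronglyMeasurable.aemeasurable
      have hnn : AEMeasurable (fun x => (‖f x‖₊ : ℝ≥0∞)) μ := hf.aestronglyMeasurable.enorm
      have hNt : eLpNorm f p μ ≠ ∞ := hf.2.ne
      rw [one_mul]
      simp only [eLpNormENN, if_pos rfl]
      refine essSup_le_of_ae_le _ (ae_of_all _ fun x => ?_)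
      simp only [MwDyadic]
      refine iSup_le fun Q => iSup_le fun hQ => iSup_le fun hx => ?_
      rw [wInt_eq_wMeasure (cube_measurableSet Q),
        setLint_density hwm (cube_measurableSet Q) hnn, hαd']
      have hH : ∫⁻ y in Q.toSet, (‖f y‖₊ : ℝ≥0∞) ∂μ
          ≤ eLpNorm f p μ * (μ Q.toSet) ^ (1 - 1 / p.toReal) := by
        refine le_trans (holder_cube hpr Q.toSet hnn) (mul_le_mul_left ?_ _)
        rw [eLpNorm_eq_lintegral_rpow_enorm_toReal hp0 hptop]
        exact ENNReal.rpow_le_rpow (lintegral_mono' Measure.restrict_le_self le_rfl)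
          (by positivity)
      calc (μ Q.toSet) ^ (1 / p.toReal - 1) * ∫⁻ y in Q.toSet, (‖f y‖₊ : ℝ≥0∞) ∂μ
          ≤ (μ Q.toSet) ^ (1 / p.toReal - 1) *
              (eLpNorm f p μ * (μ Q.toSet) ^ (1 - 1 / p.toReal)) := mul_le_mul_right hH _
        _ = eLpNorm f p μ *
              ((μ Q.toSet) ^ (1 / p.toReal - 1) * (μ Q.toSet) ^ (-(1 / p.toReal - 1))) := by
            rw [show (1:ℝ) - 1 / p.toReal = -(1 / p.toReal - 1) by ring]; ring
        _ ≤ eLpNorm f p μ * 1 := mul_le_mul_right (rpow_mul_rpow_neg_le_one _ _) _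
        _ = eLpNorm f p μ := mul_one _
  · -- q < ∞ (hence p < ∞)
    have hptop : p ≠ ∞ := fun h => hqtop (top_le_iff.mp (h ▸ hpq))
    have hpr : 1 < p.toReal := by
      have h := ENNReal.toReal_strict_mono hptop hp
      simpa using h
    have hq0 : q ≠ 0 := (lt_of_lt_of_le (lt_trans zero_lt_one hp) hpq).ne'
    have hprqr : p.toReal ≤ q.toReal := ENNReal.toReal_mono hqtop hpq
    have hqr1 : 1 < q.toReal := lt_of_lt_of_le hpr hprqr
    have hqr0 : (0:ℝ) < q.toReal := by linarith
    have hpr0 : (0:ℝ) < p.toReal := by linarith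
    have hαd' : α / (d:ℝ) = 1 / p.toReal - 1 / q.toReal := by
      have hq1 : q⁻¹ ≠ ∞ := ENNReal.inv_ne_top.mpr hq0
      have h2 := congrArg ENNReal.toReal hexp
      rw [ENNReal.toReal_add hq1 ENNReal.ofReal_ne_top, ENNReal.toReal_inv, ENNReal.toReal_inv,
        ENNReal.toReal_ofReal (div_nonneg hα0 hd0.le)] at h2
      rw [one_div, one_div]
      linarith [h2]
    set Cp : ℝ≥0∞ := pw p.toReal * (pw p.toReal * (1 - pw (1 - p.toReal))⁻¹) with hCp
    have hCpne : Cp ≠ ∞ := by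
      refine ENNReal.mul_ne_top (pw_ne_top _) (ENNReal.mul_ne_top (pw_ne_top _) ?_)
      rw [Ne, ENNReal.inv_eq_top]
      refine (tsub_pos_of_lt ?_).ne'
      rw [← pw_zero]; exact pw_strict (by linarith)
    refine ⟨Cp ^ (1 / q.toReal), ENNReal.rpow_ne_top_of_nonneg (by positivity) hCpne, ?_⟩
    intro D w hw hquad f hf
    set μ := wMeasure w with hμ
    have hwm : AEMeasurable (fun x => ENNReal.ofReal (w x)) volume :=
      ENNReal.measurable_ofReal.comp_aemeasurable hw.1.aestronglyMeasurable.aemeasurable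
    have hnn : AEMeasurable (fun x => (‖f x‖₊ : ℝ≥0∞)) μ := hf.aestronglyMeasurable.enorm
    set g : (Fin d → ℝ) → ℝ≥0∞ := hnn.mk _ with hgdef
    have hgmeas : Measurable g := hnn.measurable_mk
    have hgae : (fun x => (‖f x‖₊ : ℝ≥0∞)) =ᵐ[μ] g := hnn.ae_eq_mk
    have hIQ : ∀ s : Set (Fin d → ℝ), MeasurableSet s →
        ∫⁻ y in s, (‖f y‖₊ : ℝ≥0∞) * ENNReal.ofReal (w y) ∂volume = ∫⁻ y in s, g y ∂μ := by
      intro s hs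
      rw [setLint_density hwm hs hnn]
      exact lintegral_congr_ae (ae_restrict_of_ae hgae)
    set N := eLpNorm f p μ with hNdef
    have hNt : N ≠ ∞ := hf.2.ne
    have hNg : N = (∫⁻ x, g x ^ p.toReal ∂μ) ^ (1 / p.toReal) := by
      rw [hNdef, eLpNorm_eq_lintegral_rpow_enorm_toReal hp0 hptop]
      congr 1
      refine lintegral_congr_ae (hgae.mono fun x hx => ?_)
      simp only at hx ⊢
      exact congrArg (· ^ p.toReal) hx
    have hgN : ∫⁻ x, g x ^ p.toReal ∂μ = N ^ p.toReal := by
      rw [hNg, ← ENNReal.rpow_mul, one_div, inv_mul_cancel₀ (by linarith : p.toReal ≠ 0),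
        ENNReal.rpow_one]
    simp only [eLpNormENN, if_neg hqtop]
    rcases eq_or_ne N 0 with hN0 | hN0
    · -- degenerate: f vanishes a.e.
      have hgpr0 : ∫⁻ x, g x ^ p.toReal ∂μ = 0 := by
        rw [hgN, hN0, ENNReal.zero_rpow_of_pos hpr0]
      have hzero : ∀ x, MwDyadic D α w f x = 0 := by
        intro x
        simp only [MwDyadic]
        refine le_antisymm (iSup_le fun Q => iSup_le fun hQ => iSup_le fun hx => ?_) (zero_le)
        rw [hIQ Q.toSet (cube_measurableSet Q)]
        have hI0 : ∫⁻ y in Q.toSet, g y ∂μ = 0 := by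
          have h1 : ∫⁻ y in Q.toSet, g y ^ p.toReal ∂μ = 0 :=
            le_antisymm (hgpr0 ▸ lintegral_mono' Measure.restrict_le_self le_rfl) (zero_le)
          have h2 := holder_cube (μ := μ) (g := g) hpr Q.toSet hgmeas.aemeasurable
          rw [h1, ENNReal.zero_rpow_of_pos (by positivity), zero_mul] at h2
          exact le_antisymm h2 (zero_le)
        rw [hI0, mul_zero]
      have hz2 : ∫⁻ x, (MwDyadic D α w f x) ^ q.toReal ∂μ = 0 := by
        have h : ∀ x, (MwDyadic D α w f x) ^ q.toReal = 0 := fun x => by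
          rw [hzero x, ENNReal.zero_rpow_of_pos hqr0]
        calc ∫⁻ x, (MwDyadic D α w f x) ^ q.toReal ∂μ = ∫⁻ _, 0 ∂μ := lintegral_congr h
          _ = 0 := lintegral_zero
      rw [hz2, ENNReal.zero_rpow_of_pos (by positivity)]
      exact zero_le
    · have hθnn : (0:ℝ) ≤ p.toReal / q.toReal := div_nonneg hpr0.le hqr0.le
      have hθ1 : p.toReal / q.toReal ≤ 1 := by rw [div_le_one hqr0]; exact hprqr
      have hMle : ∀ x, MwDyadic D α w f x ≤
          (MD D μ g x) ^ (p.toReal / q.toReal) * N ^ (1 - p.toReal / q.toReal) := by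
        intro x
        simp only [MwDyadic]
        refine iSup_le fun Q => iSup_le fun hQ => iSup_le fun hx => ?_
        rw [wInt_eq_wMeasure (cube_measurableSet Q), hIQ Q.toSet (cube_measurableSet Q),
          show α / (d:ℝ) - 1 = 1 / p.toReal - 1 / q.toReal - 1 by rw [hαd']]
        refine le_trans (interp_term hpr hprqr hNt ?_) ?_
        · refine le_trans (holder_cube hpr Q.toSet hgmeas.aemeasurable)
            (mul_le_mul_left ?_ _)
          rw [hNg]
          exact ENNReal.rpow_le_rpow (lintegral_mono' Measure.restrict_le_self le_rfl)
            (by positivity)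
        · exact mul_le_mul_left
            (ENNReal.rpow_le_rpow (mavg_le_MD hQ hx) hθnn) _
      have hNqp_ne : N ^ (q.toReal - p.toReal) ≠ ∞ :=
        ENNReal.rpow_ne_top_of_nonneg (by linarith) hNt
      have hint : ∫⁻ x, (MwDyadic D α w f x) ^ q.toReal ∂μ ≤ Cp * N ^ q.toReal := by
        calc ∫⁻ x, (MwDyadic D α w f x) ^ q.toReal ∂μ
            ≤ ∫⁻ x, ((MD D μ g x) ^ (p.toReal / q.toReal)
                * N ^ (1 - p.toReal / q.toReal)) ^ q.toReal ∂μ :=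
              lintegral_mono fun x => ENNReal.rpow_le_rpow (hMle x) hqr0.le
          _ = ∫⁻ x, N ^ (q.toReal - p.toReal) * (MD D μ g x) ^ p.toReal ∂μ := by
              refine lintegral_congr fun x => ?_
              rw [ENNReal.mul_rpow_of_nonneg _ _ hqr0.le,
                ← ENNReal.rpow_mul, ← ENNReal.rpow_mul,
                show p.toReal / q.toReal * q.toReal = p.toReal by field_simp,
                show (1 - p.toReal / q.toReal) * q.toReal = q.toReal - p.toReal by field_simp,
                mul_comm]
          _ = N ^ (q.toReal - p.toReal) * ∫⁻ x, (MD D μ g x) ^ p.toReal ∂μ :=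
              lintegral_const_mul' _ _ hNqp_ne
          _ ≤ N ^ (q.toReal - p.toReal) * (Cp * ∫⁻ x, g x ^ p.toReal ∂μ) :=
              mul_le_mul_right (MD_strong hpr hgmeas (quadrant_measure_top hquad)) _
          _ = Cp * N ^ q.toReal := by
              rw [hgN, show N ^ (q.toReal - p.toReal) * (Cp * N ^ p.toReal)
                  = Cp * (N ^ (q.toReal - p.toReal) * N ^ p.toReal) by ring,
                ← ENNReal.rpow_add _ _ hN0 hNt,
                show q.toReal - p.toReal + p.toReal = q.toReal by ring]
      calc (∫⁻ x, (MwDyadic D α w f x) ^ q.toReal ∂μ) ^ (1 / q.toReal)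
          ≤ (Cp * N ^ q.toReal) ^ (1 / q.toReal) :=
            ENNReal.rpow_le_rpow hint (by positivity)
        _ = Cp ^ (1 / q.toReal) * N := by
            rw [ENNReal.mul_rpow_of_nonneg _ _ (by positivity : (0:ℝ) ≤ 1 / q.toReal),
              ← ENNReal.rpow_mul, show q.toReal * (1 / q.toReal) = 1 by field_simp,
              ENNReal.rpow_one]
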